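/- Assume L = 1. For every constant C > sup_{t∈[0,1]} |θ′(t)| there exists Λ > 0 such that for all λ ≥ Λ, sup_{t∈[0,1]} |f_λ(t)| ≤ C/λ, where f_λ = η_λ − θ. -/

import Mathlib

open Real Set Filter
open Topology

private lemma aux_mul_le (lam c x : ℝ) (hlam : 0 < lam) (hc : 1 ≤ c) (hx : x ≤ 0) :
    lam * c * x ≤ lam * x := by
  nlinarith [mul_nonneg (mul_nonneg hlam.le (sub_nonneg.2 hc)) (neg_nonneg.2 hx)]

private lemma aux_neg (C M lam B : ℝ) (hC : 0 < C) (hM : 0 ≤ M) (hlam : 1 ≤ lam)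
    (hB : B = (C / lam) ^ 2) (hkey : C ^ 3 < 4 * (C - M) * lam ^ 2) :
    2 * (lam * ((1 - B / 2) ^ 2 - 1)) + 2 * ((C / lam) * M) < 0 := by
  have hlam0 : 0 < lam := lt_of_lt_of_le one_pos hlam
  have hBl : B * lam ^ 2 = C ^ 2 := by rw [hB]; field_simp
  have hCl : C / lam * lam = C := by field_simp
  have h1 : (2 * (lam * ((1 - B / 2) ^ 2 - 1)) + 2 * ((C / lam) * M)) * lam ^ 3 =
      -2 * (C ^ 2) * lam ^ 2 + (C ^ 2) ^ 2 / 2 + 2 * C * M * lam ^ 2 := by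
    have : B * lam ^ 2 = C ^ 2 := hBl
    field_simp [hB]
    linear_combination (-4 * lam ^ 2 + B * lam ^ 2 + C ^ 2) * this
  have h2 : -2 * (C ^ 2) * lam ^ 2 + (C ^ 2) ^ 2 / 2 + 2 * C * M * lam ^ 2 < 0 := by
    nlinarith [mul_pos hC (mul_pos hlam0 hlam0)]
  have h3 : (0:ℝ) < lam ^ 3 := by positivity
  nlinarith [h1, h2, h3]

/-- Setting as in the hyperbolic-development theorems, with `L = 1`:
`θ : [0,1] → S^{d-1}` is C¹ with derivative `θ'`, and for each `lam > 0` the pair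
`(η lam, ρ lam)` solves the development ODE system.  Writing `f_lam = η lam − θ`:
for every constant `C > sup_{t ∈ [0,1]} |θ′(t)|` there is `Λ > 0` such that for all
`lam ≥ Λ`, `sup_{t∈[0,1]} |f_lam(t)| ≤ C / lam`. -/
theorem step1_first_order_bound
    {d : ℕ} (hd : 0 < d)
    (θ θ' : ℝ → EuclideanSpace ℝ (Fin d))
    (hθ1 : ∀ t ∈ Icc (0 : ℝ) 1, ‖θ t‖ = 1)
    (hθd : ∀ t ∈ Icc (0 : ℝ) 1, HasDerivAt θ (θ' t) t)
    (hθ'c : ContinuousOn θ' (Icc 0 1))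
    (η : ℝ → ℝ → EuclideanSpace ℝ (Fin d)) (ρ : ℝ → ℝ → ℝ)
    (hηc : ∀ lam > (0 : ℝ), ContinuousOn (η lam) (Icc 0 1))
    (hρc : ∀ lam > (0 : ℝ), ContinuousOn (ρ lam) (Icc 0 1))
    (hη1 : ∀ lam > (0 : ℝ), ∀ t ∈ Icc (0 : ℝ) 1, ‖η lam t‖ = 1)
    (hη0 : ∀ lam > (0 : ℝ), η lam 0 = θ 0)
    (hρ0 : ∀ lam > (0 : ℝ), ρ lam 0 = 0)
    (hρpos : ∀ lam > (0 : ℝ), ∀ t ∈ Ioc (0 : ℝ) 1, 0 < ρ lam t)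
    (hODE : ∀ lam > (0 : ℝ), ∀ t ∈ Ioc (0 : ℝ) 1,
      HasDerivAt (η lam)
        ((lam * (Real.cosh (ρ lam t) / Real.sinh (ρ lam t))) •
          (θ t - (inner ℝ (θ t) (η lam t) : ℝ) • η lam t)) t ∧
      HasDerivAt (ρ lam) (lam * (inner ℝ (θ t) (η lam t) : ℝ)) t)
    (C : ℝ) (hC : (⨆ t ∈ Icc (0 : ℝ) 1, ‖θ' t‖) < C) :
    ∃ Λ > (0 : ℝ), ∀ lam ≥ Λ, ∀ t ∈ Icc (0 : ℝ) 1, ‖η lam t - θ t‖ ≤ C / lam := by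
  set M : ℝ := ⨆ t ∈ Icc (0 : ℝ) 1, ‖θ' t‖ with hMdef
  -- M is an upper bound for ‖θ' t‖ on [0,1]
  obtain ⟨K, hK⟩ := IsCompact.exists_bound_of_continuousOn isCompact_Icc hθ'c
  have hbdd : BddAbove (range fun t => ⨆ _ : t ∈ Icc (0:ℝ) 1, ‖θ' t‖) := by
    refine ⟨max K 0, ?_⟩
    rintro x ⟨t, rfl⟩
    show (⨆ _ : t ∈ Icc (0:ℝ) 1, ‖θ' t‖) ≤ max K 0
    by_cases h : t ∈ Icc (0:ℝ) 1
    · rw [ciSup_pos h]; exact le_max_of_le_left (hK t h)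
    · rw [ciSup_neg h, Real.sSup_empty]; exact le_max_right _ _
  have hMb : ∀ t ∈ Icc (0:ℝ) 1, ‖θ' t‖ ≤ M := by
    intro t ht
    have := le_ciSup hbdd t
    rwa [ciSup_pos ht] at this
  have hM0 : 0 ≤ M := le_trans (norm_nonneg _) (hMb 0 ⟨le_refl _, zero_le_one⟩)
  have hC0 : 0 < C := lt_of_le_of_lt hM0 hC
  have hCM : 0 < C - M := sub_pos.2 hC
  refine ⟨max 1 (C ^ 3 / (4 * (C - M)) + 1), lt_of_lt_of_le one_pos (le_max_left _ _), ?_⟩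
  intro lam hlam
  have hlam1 : (1:ℝ) ≤ lam := le_trans (le_max_left _ _) hlam
  have hlam0 : (0:ℝ) < lam := lt_of_lt_of_le one_pos hlam1
  have hlamC : C ^ 3 / (4 * (C - M)) + 1 ≤ lam := le_trans (le_max_right _ _) hlam
  have hkey : C ^ 3 < 4 * (C - M) * lam ^ 2 := by
    have h1 : C ^ 3 / (4 * (C - M)) < lam := by linarith
    have h2 : C ^ 3 < lam * (4 * (C - M)) := (div_lt_iff₀ (by linarith)).1 h1
    nlinarith [mul_nonneg (mul_nonneg hCM.le hlam0.le) (sub_nonneg.2 hlam1)]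
  -- main quadratic bound
  suffices hsq : ∀ t ∈ Icc (0:ℝ) 1, ‖η lam t - θ t‖ ^ 2 ≤ (C / lam) ^ 2 by
    intro t ht
    have h := Real.sqrt_le_sqrt (hsq t ht)
    rwa [Real.sqrt_sq (norm_nonneg _), Real.sqrt_sq (by positivity)] at h
  by_contra hcon
  push_neg at hcon
  obtain ⟨t₁, ht₁, hBt₁⟩ := hcon
  set B : ℝ := (C / lam) ^ 2 with hB
  set u : ℝ → ℝ := fun t => ‖η lam t - θ t‖ ^ 2 with hu
  have hθc : ContinuousOn θ (Icc 0 1) := fun s hs =>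
    ((hθd s hs).continuousAt).continuousWithinAt
  have huc : ContinuousOn u (Icc 0 1) := (((hηc lam hlam0).sub hθc).norm).pow 2
  have hu0 : u 0 = 0 := by simp [hu, hη0 lam hlam0]
  have hB0 : 0 < B := by positivity
  set S : Set ℝ := {t | t ∈ Icc (0:ℝ) 1 ∧ B ≤ u t} with hSdef
  have hSne : S.Nonempty := ⟨t₁, ht₁, hBt₁.le⟩
  have hSc : IsClosed S := by
    have hSeq : S = Icc (0:ℝ) 1 ∩ u ⁻¹' (Ici B) := by
      ext x; simp [hSdef, Set.mem_preimage, Set.mem_Ici]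
    rw [hSeq]
    exact huc.preimage_isClosed_of_isClosed isClosed_Icc isClosed_Ici
  have hSbdd : BddBelow S := ⟨0, fun x hx => hx.1.1⟩
  set s := sInf S with hs
  have hsS : s ∈ S := hSc.csInf_mem hSne hSbdd
  have hsIcc : s ∈ Icc (0:ℝ) 1 := hsS.1
  have hsB : B ≤ u s := hsS.2
  have hs0 : 0 < s := by
    rcases lt_or_eq_of_le hsIcc.1 with h | h
    · exact h
    · exfalso; rw [← h, hu0] at hsB; linarith
  have hlt : ∀ t, 0 ≤ t → t < s → u t < B := by
    intro t ht0 hts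
    by_contra h
    push_neg at h
    exact absurd (csInf_le hSbdd ⟨⟨ht0, hts.le.trans hsIcc.2⟩, h⟩) (not_le.2 hts)
  have husB : u s = B := by
    refine le_antisymm ?_ hsB
    have hne : (𝓝[Ico (0:ℝ) s] s).NeBot := by
      rw [← mem_closure_iff_nhdsWithin_neBot, closure_Ico hs0.ne]
      exact ⟨hsIcc.1, le_refl _⟩
    have htd : Tendsto u (𝓝[Ico (0:ℝ) s] s) (𝓝 (u s)) :=
      (huc s hsIcc).mono (fun x hx => ⟨hx.1, hx.2.le.trans hsIcc.2⟩)
    exact le_of_tendsto htd (eventually_mem_nhdsWithin.mono fun t ht => (hlt t ht.1 ht.2).le)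
  -- derivative of u at s
  have hsIoc : s ∈ Ioc (0:ℝ) 1 := ⟨hs0, hsIcc.2⟩
  obtain ⟨hηd, -⟩ := hODE lam hlam0 s hsIoc
  have hθds := hθd s hsIcc
  set g : ℝ := (inner ℝ (θ s) (η lam s) : ℝ) with hg
  set c : ℝ := Real.cosh (ρ lam s) / Real.sinh (ρ lam s) with hc
  set D : EuclideanSpace ℝ (Fin d) := (lam * c) • (θ s - g • η lam s) with hD
  have hfd : HasDerivAt (fun t => η lam t - θ t) (D - θ' s) s := hηd.sub hθds
  set u' : ℝ := (inner ℝ (η lam s - θ s) (D - θ' s) : ℝ) +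
      (inner ℝ (D - θ' s) (η lam s - θ s) : ℝ) with hu'
  have hud : HasDerivAt u u' s := by
    have h := hfd.inner ℝ hfd
    have : u = fun t => (inner ℝ (η lam t - θ t) (η lam t - θ t) : ℝ) := by
      funext t; rw [hu, real_inner_self_eq_norm_sq]
    rw [this]
    exact h
  -- u' ≥ 0 since u t < u s for t < s
  have hge : 0 ≤ u' := by
    have hdW : HasDerivWithinAt u u' (Ico 0 s) s :=
      hud.hasDerivWithinAt
    rw [hasDerivWithinAt_iff_tendsto_slope,
      diff_singleton_eq_self (fun h => lt_irrefl s h.2)] at hdW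
    have hne : (𝓝[Ico (0:ℝ) s] s).NeBot := by
      rw [← mem_closure_iff_nhdsWithin_neBot, closure_Ico hs0.ne]
      exact ⟨hsIcc.1, le_refl _⟩
    refine ge_of_tendsto hdW (eventually_mem_nhdsWithin.mono fun t ht => ?_)
    rw [slope_def_field]
    have h1 : u t - u s < 0 := by
      have := hlt t ht.1 ht.2; rw [husB]; linarith
    have h2 : t - s < 0 := sub_neg.2 ht.2
    -- slope_def_field gives (u t - u s) / (t - s)
    exact le_of_lt (div_pos_of_neg_of_neg h1 h2)
  -- compute inner products
  have hθθ : (inner ℝ (θ s) (θ s) : ℝ) = 1 := by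
    rw [real_inner_self_eq_norm_sq, hθ1 s hsIcc]; norm_num
  have hηη : (inner ℝ (η lam s) (η lam s) : ℝ) = 1 := by
    rw [real_inner_self_eq_norm_sq, hη1 lam hlam0 s hsIcc]; norm_num
  have hηθ : (inner ℝ (η lam s) (θ s) : ℝ) = g := real_inner_comm _ _
  have e1 : (inner ℝ (η lam s - θ s) D : ℝ) = lam * c * (g ^ 2 - 1) := by
    rw [hD, real_inner_smul_right]
    rw [inner_sub_right, inner_sub_left, inner_sub_left, real_inner_smul_right,
      real_inner_smul_right, hθθ, hηη, hηθ, ← hg]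
    ring
  have hgB : g = 1 - B / 2 := by
    have hexp : u s = 2 - 2 * g := by
      show ‖η lam s - θ s‖ ^ 2 = 2 - 2 * g
      rw [← real_inner_self_eq_norm_sq, inner_sub_left, inner_sub_right,
        inner_sub_right, hθθ, hηη, hηθ, ← hg]
      ring
    rw [husB] at hexp; linarith
  have hn : ‖η lam s - θ s‖ = C / lam := by
    have h1 : ‖η lam s - θ s‖ ^ 2 = (C / lam) ^ 2 := husB
    have := congrArg Real.sqrt h1
    rwa [Real.sqrt_sq (norm_nonneg _), Real.sqrt_sq (by positivity)] at this
  have hcge : 1 ≤ c := by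
    have hρp : 0 < ρ lam s := hρpos lam hlam0 s hsIoc
    have hsp : 0 < Real.sinh (ρ lam s) := Real.sinh_pos_iff.2 hρp
    rw [hc, one_le_div hsp]
    exact (Real.sinh_lt_cosh _).le
  have hip : -(‖η lam s - θ s‖ * M) ≤ (inner ℝ (η lam s - θ s) (θ' s) : ℝ) := by
    have h1 := abs_real_inner_le_norm (η lam s - θ s) (θ' s)
    have h2 : ‖η lam s - θ s‖ * ‖θ' s‖ ≤ ‖η lam s - θ s‖ * M :=
      mul_le_mul_of_nonneg_left (hMb s hsIcc) (norm_nonneg _)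
    have h3 := neg_abs_le ((inner ℝ (η lam s - θ s) (θ' s) : ℝ))
    linarith [abs_le.1 h1]
  -- upper bound on u'
  have hgsq : g ^ 2 - 1 ≤ 0 := by
    have h1 : |g| ≤ 1 := by
      have := abs_real_inner_le_norm (θ s) (η lam s)
      rwa [hθ1 s hsIcc, hη1 lam hlam0 s hsIcc, one_mul, ← hg] at this
    nlinarith [sq_abs g, abs_nonneg g]
  have hub : u' ≤ 2 * (lam * (g ^ 2 - 1)) + 2 * ((C / lam) * M) := by
    have e2 : u' = 2 * ((inner ℝ (η lam s - θ s) D : ℝ) -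
        (inner ℝ (η lam s - θ s) (θ' s) : ℝ)) := by
      have hcomm : (inner ℝ (D - θ' s) (η lam s - θ s) : ℝ) =
          (inner ℝ (η lam s - θ s) (D - θ' s) : ℝ) := real_inner_comm _ _
      have hsplit : (inner ℝ (η lam s - θ s) (D - θ' s) : ℝ) =
          (inner ℝ (η lam s - θ s) D : ℝ) - (inner ℝ (η lam s - θ s) (θ' s) : ℝ) :=
        inner_sub_right _ _ _
      rw [hu', hcomm, hsplit]
      ring
    rw [e2, e1]
    have h4 : lam * c * (g ^ 2 - 1) ≤ lam * (g ^ 2 - 1) :=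
      aux_mul_le lam c _ hlam0 hcge hgsq
    have h5 : -(inner ℝ (η lam s - θ s) (θ' s) : ℝ) ≤ (C / lam) * M := by
      rw [← hn]; linarith
    linarith
  -- numeric contradiction
  have hneg : 2 * (lam * (g ^ 2 - 1)) + 2 * ((C / lam) * M) < 0 := by
    rw [hgB]
    exact aux_neg C M lam B hC0 hM0 hlam1 hB hkey
  linarith
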